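/- For symmetric n×n real matrices C, D and j ∈ ℕ with j ≥ 1, the matrix G_j = [[-C, jI],[jI, -D]] satisfies dim ker G_j = dim ker (CD - j²I). -/

import Mathlib

open Matrix

/-- `G_j(C,D) = [[-C, jI],[jI, -D]]`. -/
noncomputable def Gmat (n j : ℕ) (C D : Matrix (Fin n) (Fin n) ℝ) :
    Matrix (Fin n ⊕ Fin n) (Fin n ⊕ Fin n) ℝ :=
  fromBlocks (-C) ((j : ℝ) • 1) ((j : ℝ) • 1) (-D)

theorem stmt1 (n j : ℕ) (hj : 1 ≤ j) (C D : Matrix (Fin n) (Fin n) ℝ)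
    (hC : C.IsSymm) (hD : D.IsSymm) :
    Module.finrank ℝ (LinearMap.ker (Gmat n j C D).mulVecLin) =
      Module.finrank ℝ (LinearMap.ker (C * D - ((j : ℝ) ^ 2) • 1).mulVecLin) := by
  have hk0 : (j : ℝ) ≠ 0 := by
    exact Nat.cast_ne_zero.mpr (by omega)
  set k : ℝ := (j : ℝ) with hk
  set A : Matrix (Fin n) (Fin n) ℝ := D * C - (k ^ 2) • 1 with hA
  -- the linear map x ↦ (x, k⁻¹ • C x)
  let φ : (Fin n → ℝ) →ₗ[ℝ] (Fin n ⊕ Fin n → ℝ) :=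
    { toFun := fun x => Sum.elim x (k⁻¹ • C.mulVec x)
      map_add' := by
        intro x y; funext i; cases i <;>
          simp [Matrix.mulVec_add, smul_add]
      map_smul' := by
        intro c x; funext i
        cases i with
        | inl i => simp
        | inr i => simp [Matrix.mulVec_smul]; ring }
  have hinj : Function.Injective φ := by
    intro x y hxy
    funext i
    have := congrFun hxy (Sum.inl i)
    simpa [φ] using this
  have hmap : Submodule.map φ (LinearMap.ker A.mulVecLin)
      = LinearMap.ker (Gmat n j C D).mulVecLin := by
    ext v
    simp only [Submodule.mem_map, LinearMap.mem_ker, mulVecLin_apply]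
    constructor
    · rintro ⟨x, hx, rfl⟩
      have hx' : D *ᵥ (C *ᵥ x) = k ^ 2 • x := by
        have := sub_eq_zero.mp (by simpa [hA, Matrix.sub_mulVec, Matrix.smul_mulVec,
          Matrix.one_mulVec, sub_eq_zero] using hx)
        simpa [Matrix.mulVec_mulVec] using this
      show (Gmat n j C D) *ᵥ (Sum.elim x (k⁻¹ • C *ᵥ x)) = 0
      rw [Gmat, fromBlocks_mulVec]
      funext i
      cases i with
      | inl i =>
        simp [Matrix.smul_mulVec, Matrix.one_mulVec, Matrix.neg_mulVec,
          smul_smul, mul_inv_cancel₀ hk0, ← hk]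
      | inr i =>
        have : D *ᵥ (k⁻¹ • C *ᵥ x) = k • x := by
          rw [Matrix.mulVec_smul, hx', smul_smul]
          rw [pow_two, ← mul_assoc, inv_mul_cancel₀ hk0, one_mul]
        simp [Matrix.smul_mulVec, Matrix.one_mulVec, Matrix.neg_mulVec, this, ← hk]
    · intro hv
      refine ⟨v ∘ Sum.inl, ?_, ?_⟩
      · -- extract the two block equations
        have hv' := hv
        rw [show (Gmat n j C D) *ᵥ v = _ from by rw [Gmat, fromBlocks_mulVec]] at hv'
        have h1 : (-C) *ᵥ (v ∘ Sum.inl) + k • (v ∘ Sum.inr) = 0 := by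
          funext i
          have := congrFun hv' (Sum.inl i)
          simpa [Matrix.smul_mulVec, Matrix.one_mulVec] using this
        have h2 : k • (v ∘ Sum.inl) + (-D) *ᵥ (v ∘ Sum.inr) = 0 := by
          funext i
          have := congrFun hv' (Sum.inr i)
          simpa [Matrix.smul_mulVec, Matrix.one_mulVec] using this
        have hCx : C *ᵥ (v ∘ Sum.inl) = k • (v ∘ Sum.inr) := by
          have := h1
          rw [Matrix.neg_mulVec, neg_add_eq_zero] at this
          exact this
        have hDy : D *ᵥ (v ∘ Sum.inr) = k • (v ∘ Sum.inl) := by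
          have := h2
          rw [Matrix.neg_mulVec, add_comm, neg_add_eq_zero] at this
          exact this
        show A *ᵥ (v ∘ Sum.inl) = 0
        rw [hA, Matrix.sub_mulVec, Matrix.smul_mulVec, Matrix.one_mulVec,
          ← Matrix.mulVec_mulVec, hCx, Matrix.mulVec_smul, hDy, smul_smul, ← pow_two,
          sub_self]
      · -- φ (v ∘ inl) = v
        have hv' := hv
        rw [show (Gmat n j C D) *ᵥ v = _ from by rw [Gmat, fromBlocks_mulVec]] at hv'
        have h1 : (-C) *ᵥ (v ∘ Sum.inl) + k • (v ∘ Sum.inr) = 0 := by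
          funext i
          have := congrFun hv' (Sum.inl i)
          simpa [Matrix.smul_mulVec, Matrix.one_mulVec] using this
        have hCx : C *ᵥ (v ∘ Sum.inl) = k • (v ∘ Sum.inr) := by
          rw [Matrix.neg_mulVec, neg_add_eq_zero] at h1
          exact h1
        funext i
        cases i with
        | inl i => rfl
        | inr i =>
          show (k⁻¹ • C *ᵥ (v ∘ Sum.inl)) i = v (Sum.inr i)
          rw [hCx, smul_smul, inv_mul_cancel₀ hk0, one_smul]
          rfl
  have h1 : Module.finrank ℝ (LinearMap.ker (Gmat n j C D).mulVecLin)
      = Module.finrank ℝ (LinearMap.ker A.mulVecLin) := by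
    rw [← hmap]
    exact (LinearEquiv.finrank_eq (Submodule.equivMapOfInjective φ hinj _)).symm
  have ht : (C * D - (k ^ 2) • 1)ᵀ = A := by
    rw [hA, transpose_sub, transpose_mul, transpose_smul, transpose_one, hC.eq, hD.eq]
  have hr : (C * D - (k ^ 2) • 1).rank = A.rank := by
    rw [← ht, rank_transpose]
  have hrn1 := LinearMap.finrank_range_add_finrank_ker A.mulVecLin
  have hrn2 := LinearMap.finrank_range_add_finrank_ker (C * D - (k ^ 2) • 1).mulVecLin
  have hrk : (C * D - (k ^ 2) • 1).rank
      = Module.finrank ℝ (LinearMap.range (C * D - (k ^ 2) • 1).mulVecLin) := rfl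
  have hrkA : A.rank = Module.finrank ℝ (LinearMap.range A.mulVecLin) := rfl
  rw [h1]
  omega
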